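/- If I is a squarefree stable monomial ideal of S = K[x_1,...,x_n] and β_{k,k+ℓ}(I) is an extremal Betti number of I, then 1 ≤ β_{k,k+ℓ}(I) ≤ C(k+ℓ-1, ℓ-1), the binomial coefficient counting squarefree monomials of degree ℓ with m(u) = k+ℓ. -/

import Mathlib

open scoped Classical

noncomputable section

/-- The squarefree monomial `∏_{i ∈ A} x_i` of `S = K[x_1,…,x_n]`,
encoded by its support `A ⊆ {1,…,n}`. -/
def sqMon (K : Type*) [Field K] {n : ℕ} (A : Finset (Fin n)) : MvPolynomial (Fin n) K :=
  ∏ i ∈ A, MvPolynomial.X i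

/-- `[x_1,…,x_n]^d`: the ideal generated by all squarefree monomials of degree `d`. -/
def sqPow (K : Type*) [Field K] (n d : ℕ) : Ideal (MvPolynomial (Fin n) K) :=
  Ideal.span {p | ∃ A : Finset (Fin n), A.card = d ∧ p = sqMon K A}

/-- `I` is a squarefree monomial ideal: generated by squarefree monomials. -/
def IsSqMonIdeal (K : Type*) [Field K] {n : ℕ} (I : Ideal (MvPolynomial (Fin n) K)) : Prop :=
  ∃ G : Set (Finset (Fin n)), I = Ideal.span (sqMon K '' G)

/-- `A` encodes a minimal monomial generator of the squarefree monomial ideal `I`. -/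
def IsMinGen (K : Type*) [Field K] {n : ℕ} (I : Ideal (MvPolynomial (Fin n) K))
    (A : Finset (Fin n)) : Prop :=
  sqMon K A ∈ I ∧ ∀ B : Finset (Fin n), B ⊂ A → sqMon K B ∉ I

/-- `m(u)` : the largest index (1-based) occurring in the squarefree monomial with support `A`. -/
def mIdx {n : ℕ} (A : Finset (Fin n)) : ℕ := A.sup (fun i => i.1 + 1)

/-- Squarefree stable ideal: for every minimal generator `u`,
`x_j u / x_{m(u)} ∈ I` for all `j < m(u)`, `j ∉ supp u`. -/
def IsSqStableIdeal (K : Type*) [Field K] {n : ℕ} (I : Ideal (MvPolynomial (Fin n) K)) : Prop :=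
  IsSqMonIdeal K I ∧ ∀ A : Finset (Fin n), IsMinGen K I A →
    ∀ (hA : A.Nonempty) (j : Fin n), j ∉ A → j < A.max' hA →
      sqMon K (insert j (A.erase (A.max' hA))) ∈ I

/-- Squarefree strongly stable ideal: for every minimal generator `u`,
`x_j u / x_i ∈ I` for all `i ∈ supp u` and `j < i`, `j ∉ supp u`. -/
def IsSqStronglyStableIdeal (K : Type*) [Field K] {n : ℕ}
    (I : Ideal (MvPolynomial (Fin n) K)) : Prop :=
  IsSqMonIdeal K I ∧ ∀ A : Finset (Fin n), IsMinGen K I A →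
    ∀ i ∈ A, ∀ j : Fin n, j ∉ A → j < i → sqMon K (insert j (A.erase i)) ∈ I

/-- The squarefree lexicographic order (on supports of equal-degree squarefree monomials):
`A >_slex B` iff at the first index where they differ, `A` has the smaller index. -/
def slexGT {n : ℕ} (A B : Finset (Fin n)) : Prop :=
  ∃ h : (symmDiff A B).Nonempty, (symmDiff A B).min' h ∈ A

/-- Squarefree lexsegment ideal. -/
def IsSqLexIdeal (K : Type*) [Field K] {n : ℕ} (I : Ideal (MvPolynomial (Fin n) K)) : Prop :=
  IsSqMonIdeal K I ∧ ∀ A B : Finset (Fin n), A.card = B.card →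
    sqMon K A ∈ I → slexGT B A → sqMon K B ∈ I

/-- `indeg I`: the least degree of a (squarefree) monomial in `I`. -/
def indeg (K : Type*) [Field K] {n : ℕ} (I : Ideal (MvPolynomial (Fin n) K)) : ℕ :=
  sInf {d : ℕ | ∃ A : Finset (Fin n), A.card = d ∧ sqMon K A ∈ I}

/-- `G(I)_d`: the minimal generators of `I` in degree `d`, as a finset of supports. -/
def mgens (K : Type*) [Field K] {n : ℕ} (I : Ideal (MvPolynomial (Fin n) K)) (d : ℕ) :
    Finset (Finset (Fin n)) :=
  Finset.univ.filter (fun A => IsMinGen K I A ∧ A.card = d)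

/-- Graded Betti numbers `β_{k,k+j}(M)` of `M = ⊕ I_i e_i` (deg `e_i = f i`),
via the Aramova–Herzog–Hibi formula. -/
def betti (K : Type*) [Field K] {n r : ℕ} (I : Fin r → Ideal (MvPolynomial (Fin n) K))
    (f : Fin r → ℕ) (k j : ℕ) : ℕ :=
  ∑ i : Fin r, ∑ A ∈ mgens K (I i) (j - f i), Nat.choose (mIdx A - A.card) k

/-- Graded Betti numbers `β_{k,k+j}(I)` of a squarefree stable ideal (AHH formula). -/
def bettiI (K : Type*) [Field K] {n : ℕ} (I : Ideal (MvPolynomial (Fin n) K)) (k j : ℕ) : ℕ :=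
  ∑ A ∈ mgens K I j, Nat.choose (mIdx A - A.card) k

/-- `β k ℓ` (standing for `β_{k,k+ℓ}`) is an extremal Betti number. -/
def IsExtremal (β : ℕ → ℕ → ℕ) (k ℓ : ℕ) : Prop :=
  β k ℓ ≠ 0 ∧ ∀ i j : ℕ, k ≤ i → ℓ ≤ j → (i, j) ≠ (k, ℓ) → β i j = 0

/-- Squarefree stable submodule `M = ⊕ I_i e_i ⊊ F` (characterization):
each `I_i` a proper squarefree stable ideal, and
`[x_1,…,x_n]^{f_{i+1}-f_i} I_{i+1} ⊆ I_i`. -/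
def IsSqStableSubmodule (K : Type*) [Field K] {n r : ℕ}
    (I : Fin r → Ideal (MvPolynomial (Fin n) K)) (f : Fin r → ℕ) : Prop :=
  (∀ i, I i ≠ ⊤ ∧ IsSqStableIdeal K (I i)) ∧
  ∀ i : Fin r, ∀ h : i.1 + 1 < r,
    sqPow K n (f ⟨i.1 + 1, h⟩ - f i) * I ⟨i.1 + 1, h⟩ ≤ I i

/-- Squarefree lexicographic submodule (characterization of Proposition `lex`):
each `I_i` a proper squarefree lexsegment ideal, and
`[x_1,…,x_n]^{indeg I_{i+1} + f_{i+1} - f_i} ⊆ I_i`. -/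
def IsSqLexSubmodule (K : Type*) [Field K] {n r : ℕ}
    (I : Fin r → Ideal (MvPolynomial (Fin n) K)) (f : Fin r → ℕ) : Prop :=
  (∀ i, IsSqLexIdeal K (I i) ∧ I i ≠ ⊤) ∧
  ∀ i : Fin r, ∀ h : i.1 + 1 < r,
    sqPow K n (indeg K (I ⟨i.1 + 1, h⟩) + f ⟨i.1 + 1, h⟩ - f i) ≤ I i

end

/-- The cardinality of a squarefree support is at most its largest index. -/
lemma card_le_mIdx {n : ℕ} (A : Finset (Fin n)) : A.card ≤ mIdx A := by
  have h1 : A.card = (A.image Fin.val).card :=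
    (Finset.card_image_of_injective A Fin.val_injective).symm
  have h2 : A.image Fin.val ⊆ Finset.range (mIdx A) := by
    intro a ha
    obtain ⟨i, hi, rfl⟩ := Finset.mem_image.mp ha
    have : i.1 + 1 ≤ mIdx A := Finset.le_sup (f := fun i : Fin n => i.1 + 1) hi
    simpa using Nat.lt_of_lt_of_le (Nat.lt_succ_self _) this
  calc A.card = (A.image Fin.val).card := h1
    _ ≤ (Finset.range (mIdx A)).card := Finset.card_le_card h2
    _ = mIdx A := Finset.card_range _

/-- if `β_{k,k+ℓ}(I)` is an extremal Betti number of a squarefree stable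
ideal, then `1 ≤ β_{k,k+ℓ}(I) ≤ C(k+ℓ-1, ℓ-1)`. -/
theorem stmt_11 (K : Type*) [Field K] (n : ℕ) (I : Ideal (MvPolynomial (Fin n) K))
    (hI : IsSqStableIdeal K I) (hproper : I ≠ ⊤) (k ℓ : ℕ)
    (hext : IsExtremal (bettiI K I) k ℓ) :
    1 ≤ bettiI K I k ℓ ∧ bettiI K I k ℓ ≤ Nat.choose (k + ℓ - 1) (ℓ - 1) := by
  obtain ⟨hne, hzero⟩ := hext
  refine ⟨Nat.one_le_iff_ne_zero.mpr hne, ?_⟩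
  rcases Nat.eq_zero_or_pos ℓ with hℓ | hℓ
  · -- ℓ = 0 is impossible: it would force 1 ∈ I
    exfalso
    apply hne
    subst hℓ
    have hemp : mgens K I 0 = ∅ := by
      ext A
      simp only [mgens, Finset.mem_filter, Finset.mem_univ, true_and, Finset.notMem_empty,
        iff_false, not_and]
      intro hmin hcard
      have hA0 : A = ∅ := Finset.card_eq_zero.mp hcard
      have h1 : sqMon K A = 1 := by simp [sqMon, hA0]
      exact hproper (Ideal.eq_top_iff_one I |>.mpr (h1 ▸ hmin.1))
    simp [bettiI, hemp]
  -- ℓ ≥ 1. First: extremality kills β_{k+1, ℓ}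
  have hb1 : bettiI K I (k + 1) ℓ = 0 :=
    hzero (k + 1) ℓ (by omega) le_rfl (by simp)
  have hkey : ∀ A ∈ mgens K I ℓ, mIdx A - ℓ ≤ k := by
    intro A hA
    have h0 : Nat.choose (mIdx A - A.card) (k + 1) = 0 := by
      have := (Finset.sum_eq_zero_iff.mp (by simpa only [bettiI] using hb1)) A hA
      simpa using this
    have hcardA : A.card = ℓ := (Finset.mem_filter.mp hA).2.2
    rw [hcardA] at h0
    have := Nat.choose_eq_zero_iff.mp h0
    omega
  have hcard : ∀ A ∈ mgens K I ℓ, A.card = ℓ := fun A hA => (Finset.mem_filter.mp hA).2.2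
  -- the Betti number counts generators with maximal index k + ℓ
  set T : Finset (Finset (Fin n)) := (mgens K I ℓ).filter (fun A => mIdx A = k + ℓ) with hTdef
  have hT : bettiI K I k ℓ = T.card := by
    rw [hTdef, Finset.card_filter]
    apply Finset.sum_congr rfl
    intro A hA
    have h1 := hkey A hA
    have h2 := card_le_mIdx A
    have h3 := hcard A hA
    rw [h3]
    by_cases h : mIdx A = k + ℓ
    · rw [if_pos h]
      have hk : mIdx A - ℓ = k := by omega
      rw [hk, Nat.choose_self]
    · rw [if_neg h]
      exact Nat.choose_eq_zero_of_lt (by omega)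
  rw [hT]
  -- inject T into (ℓ-1)-subsets of range (k+ℓ-1) by deleting the top index
  have hmem : ∀ A ∈ T, A.card = ℓ ∧ (k + ℓ - 1) ∈ A.image Fin.val ∧
      (A.image Fin.val).erase (k + ℓ - 1) ∈ (Finset.range (k + ℓ - 1)).powersetCard (ℓ - 1) := by
    intro A hA
    obtain ⟨hAg, hAm⟩ := Finset.mem_filter.mp hA
    have hcardA : A.card = ℓ := hcard A hAg
    have hAne : A.Nonempty := Finset.card_pos.mp (by omega)
    obtain ⟨b, hb, hbsup⟩ := Finset.exists_mem_eq_sup A hAne (fun i : Fin n => i.1 + 1)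
    have hbsup' : A.sup (fun i : Fin n => i.1 + 1) = b.1 + 1 := hbsup
    have hAm' : A.sup (fun i : Fin n => i.1 + 1) = k + ℓ := hAm
    have hbval : b.1 = k + ℓ - 1 := by omega
    have hmemim : (k + ℓ - 1) ∈ A.image Fin.val :=
      Finset.mem_image.mpr ⟨b, hb, hbval⟩
    refine ⟨hcardA, hmemim, ?_⟩
    rw [Finset.mem_powersetCard]
    constructor
    · intro a ha
      obtain ⟨hane, haim⟩ := Finset.mem_erase.mp ha
      obtain ⟨j, hj, rfl⟩ := Finset.mem_image.mp haim
      have hle : j.1 + 1 ≤ A.sup (fun i : Fin n => i.1 + 1) := by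
        simpa using Finset.le_sup (f := fun i : Fin n => i.1 + 1) hj
      exact Finset.mem_range.mpr (by omega)
    · rw [Finset.card_erase_of_mem hmemim,
        Finset.card_image_of_injective A Fin.val_injective, hcardA]
  have hinj : Set.InjOn (fun A : Finset (Fin n) => (A.image Fin.val).erase (k + ℓ - 1)) ↑T := by
    intro A hA B hB hAB
    obtain ⟨_, hAmem, _⟩ := hmem A hA
    obtain ⟨_, hBmem, _⟩ := hmem B hB
    have him : A.image Fin.val = B.image Fin.val := by
      have h1 : insert (k + ℓ - 1) ((A.image Fin.val).erase (k + ℓ - 1)) = A.image Fin.val :=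
        Finset.insert_erase hAmem
      have h2 : insert (k + ℓ - 1) ((B.image Fin.val).erase (k + ℓ - 1)) = B.image Fin.val :=
        Finset.insert_erase hBmem
      rw [← h1, ← h2]
      exact congrArg _ hAB
    exact Finset.image_injective Fin.val_injective him
  have hmaps : ∀ A ∈ T, (fun A => (A.image Fin.val).erase (k + ℓ - 1)) A ∈
      (Finset.range (k + ℓ - 1)).powersetCard (ℓ - 1) := fun A hA => (hmem A hA).2.2
  have := Finset.card_le_card_of_injOn _ hmaps hinj
  simpa [Finset.card_powersetCard] using this
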